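/- (Supersolution profile for the slab exit problem.) Let ν ≥ 1, β > 0, 0 < ε ≤ β, R > 0, b > 0, and suppose L > 0 is large enough that −bL + 5R < 0 < L − 5R. Define constants α₅ = 1 + e^{20νβR}, α₄ = e^{−20νβR}, α₂ = min(1, 4ν²β e^{−20νβR}/ε), α₁ = εα₂/(4ν²β), α₃ = 1 + 4ν²β/(εα₂), and define u on [−bL, L] by: u(r) = α₁ e^{α₂(ε/ν)(bL−5R)} (α₃ − e^{4νβ(r−(−bL+5R))}) for r ∈ [−bL, −bL+5R]; u(r) = e^{−α₂(ε/ν) r} for r ∈ (−bL+5R, L−5R); u(r) = α₄ e^{−α₂(ε/ν)(L−5R)} (α₅ − e^{4νβ(r−(L−5R))}) for r ∈ [L−5R, L]. Then: (i) u is positive, continuous and decreasing on [−bL, L]; (ii) u is differentiable at r = −bL+5R (the one-sided derivatives agree) and at r = L−5R the jump of the derivative satisfies u'((L−5R)₊) − u'((L−5R)₋) ≤ 0; (iii) there exists λ₀ > 0 depending only on ν, β, ε, R such that for every r ∈ (−bL, L) with r ∉ {−bL+5R, L−5R}, every α ∈ [1/ν, ν], and every q ∈ [−β, β] satisfying additionally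 q ≥ ε whenever −bL+5R < r < L−5R, one has λ₀ u(r) + (α/2) u''(r) + q u'(r) ≤ 0. -/

import Mathlib

open Set

noncomputable section

/-- the constant `α₂ = min(1, 4ν²β e^{-20νβR}/ε)`. -/
def al2 (ν β ε R : ℝ) : ℝ := min 1 (4 * ν ^ 2 * β * Real.exp (-(20 * ν * β * R)) / ε)

/-- the constant `α₁ = ε α₂ / (4ν²β)`. -/
def al1 (ν β ε R : ℝ) : ℝ := ε * al2 ν β ε R / (4 * ν ^ 2 * β)

/-- the constant `α₃ = 1 + 4ν²β/(ε α₂)`. -/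
def al3 (ν β ε R : ℝ) : ℝ := 1 + 4 * ν ^ 2 * β / (ε * al2 ν β ε R)

/-- the constant `α₄ = e^{-20νβR}`. -/
def al4 (ν β R : ℝ) : ℝ := Real.exp (-(20 * ν * β * R))

/-- the constant `α₅ = 1 + e^{20νβR}`. -/
def al5 (ν β R : ℝ) : ℝ := 1 + Real.exp (20 * ν * β * R)

/-- the supermartingale profile `u` on `[-bL, L]`. -/
def profileU (ν β ε R b L : ℝ) (r : ℝ) : ℝ :=
  if r ≤ -(b * L) + 5 * R then
    al1 ν β ε R * Real.exp (al2 ν β ε R * (ε / ν) * (b * L - 5 * R)) *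
      (al3 ν β ε R - Real.exp (4 * ν * β * (r - (-(b * L) + 5 * R))))
  else if r < L - 5 * R then
    Real.exp (-(al2 ν β ε R * (ε / ν) * r))
  else
    al4 ν β R * Real.exp (-(al2 ν β ε R * (ε / ν) * (L - 5 * R))) *
      (al5 ν β R - Real.exp (4 * ν * β * (r - (L - 5 * R))))

namespace SupAux
section Scoped1
open Filter Set

variable {ν β ε R : ℝ}

lemma al2_pos (hν : 1 ≤ ν) (hβ : 0 < β) (hε : 0 < ε) : 0 < al2 ν β ε R := by
  have hν0 : 0 < ν := lt_of_lt_of_le one_pos hν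
  exact lt_min one_pos (by positivity)

lemma al2_le_one : al2 ν β ε R ≤ 1 := min_le_left _ _

lemma al2_le : al2 ν β ε R ≤ 4 * ν ^ 2 * β * Real.exp (-(20 * ν * β * R)) / ε :=
  min_le_right _ _

lemma al1_pos (hν : 1 ≤ ν) (hβ : 0 < β) (hε : 0 < ε) : 0 < al1 ν β ε R := by
  have hν0 : 0 < ν := lt_of_lt_of_le one_pos hν
  have := al2_pos (R := R) hν hβ hε
  unfold al1; positivity

lemma al3_gt_one (hν : 1 ≤ ν) (hβ : 0 < β) (hε : 0 < ε) : 1 < al3 ν β ε R := by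
  have hν0 : 0 < ν := lt_of_lt_of_le one_pos hν
  have := al2_pos (R := R) hν hβ hε
  have : 0 < 4 * ν ^ 2 * β / (ε * al2 ν β ε R) := by positivity
  unfold al3; linarith

lemma al5_gt_one : 1 < al5 ν β R := by
  have := Real.exp_pos (20 * ν * β * R); unfold al5; linarith

lemma key1 (hν : 1 ≤ ν) (hβ : 0 < β) : al1 ν β ε R * (4 * ν * β) = al2 ν β ε R * (ε / ν) := by
  have hν0 : (ν:ℝ) ≠ 0 := by positivity
  have hβ0 : (β:ℝ) ≠ 0 := ne_of_gt hβ
  unfold al1; field_simp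

lemma key2 (hν : 1 ≤ ν) (hβ : 0 < β) (hε : 0 < ε) : al1 ν β ε R * (al3 ν β ε R - 1) = 1 := by
  have hν0 : (ν:ℝ) ≠ 0 := by positivity
  have hβ0 : (β:ℝ) ≠ 0 := ne_of_gt hβ
  have h2 : al2 ν β ε R ≠ 0 := ne_of_gt (al2_pos hν hβ hε)
  unfold al1 al3; field_simp; ring

lemma key3 : al4 ν β R * (al5 ν β R - 1) = 1 := by
  unfold al4 al5; rw [add_sub_cancel_left, ← Real.exp_add]; simp

end Scoped1

open Filter Set
lemma hasDerivAt_affExp (C D K s r : ℝ) :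
    HasDerivAt (fun x => C * (D - Real.exp (K * (x - s))))
      (-(C * K * Real.exp (K * (r - s)))) r := by
  have h : HasDerivAt (fun x => K * (x - s)) K r := by
    simpa using ((hasDerivAt_id r).sub_const s).const_mul K
  have h3 := (h.exp.const_sub D).const_mul C
  exact h3.congr_deriv (by ring)

lemma deriv_affExp (C D K s : ℝ) :
    deriv (fun x => C * (D - Real.exp (K * (x - s))))
      = fun r => -(C * K * Real.exp (K * (r - s))) :=
  funext fun r => (hasDerivAt_affExp C D K s r).deriv

lemma hasDerivAt_affExp' (C D K s r : ℝ) :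
    HasDerivAt (fun x => -(C * K * Real.exp (K * (x - s))))
      (-(C * K * K * Real.exp (K * (r - s)))) r := by
  have h : HasDerivAt (fun x => K * (x - s)) K r := by
    simpa using ((hasDerivAt_id r).sub_const s).const_mul K
  have h3 := (h.exp.const_mul (C * K)).fun_neg
  exact h3.congr_deriv (by ring)

lemma deriv2_affExp (C D K s r : ℝ) :
    deriv (deriv (fun x => C * (D - Real.exp (K * (x - s))))) r
      = -(C * K * K * Real.exp (K * (r - s))) := by
  rw [deriv_affExp]
  exact (hasDerivAt_affExp' C D K s r).deriv

lemma hasDerivAt_expNeg (c r : ℝ) :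
    HasDerivAt (fun x => Real.exp (-(c * x))) (-(c * Real.exp (-(c * r)))) r := by
  have h : HasDerivAt (fun x => -(c * x)) (-c) r := by
    simpa using ((hasDerivAt_id r).const_mul c).fun_neg
  exact h.exp.congr_deriv (by ring)

lemma deriv_expNeg (c : ℝ) :
    deriv (fun x => Real.exp (-(c * x))) = fun r => -(c * Real.exp (-(c * r))) :=
  funext fun r => (hasDerivAt_expNeg c r).deriv

lemma deriv2_expNeg (c r : ℝ) :
    deriv (deriv (fun x => Real.exp (-(c * x)))) r = c * c * Real.exp (-(c * r)) := by
  rw [deriv_expNeg]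
  have h := ((hasDerivAt_expNeg c r).const_mul c).fun_neg
  rw [h.deriv]; ring

section G
variable (ν β ε R b L : ℝ)

def gg1 : ℝ → ℝ := fun r =>
  al1 ν β ε R * Real.exp (al2 ν β ε R * (ε / ν) * (b * L - 5 * R)) *
    (al3 ν β ε R - Real.exp (4 * ν * β * (r - (-(b * L) + 5 * R))))
def gg2 : ℝ → ℝ := fun r => Real.exp (-(al2 ν β ε R * (ε / ν) * r))
def gg3 : ℝ → ℝ := fun r =>
  al4 ν β R * Real.exp (-(al2 ν β ε R * (ε / ν) * (L - 5 * R))) *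
    (al5 ν β R - Real.exp (4 * ν * β * (r - (L - 5 * R))))

lemma profileU_def (r : ℝ) : profileU ν β ε R b L r =
    if r ≤ -(b * L) + 5 * R then gg1 ν β ε R b L r
    else if r < L - 5 * R then gg2 ν β ε R r else gg3 ν β ε R L r := rfl

end G

variable {ν β ε R b L : ℝ}

lemma gg1_eq_gg2 (hν : 1 ≤ ν) (hβ : 0 < β) (hε : 0 < ε) :
    gg1 ν β ε R b L (-(b * L) + 5 * R) = gg2 ν β ε R (-(b * L) + 5 * R) := by
  unfold gg1 gg2
  rw [show 4 * ν * β * ((-(b * L) + 5 * R) - (-(b * L) + 5 * R)) = 0 by ring, Real.exp_zero,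
    show -(al2 ν β ε R * (ε / ν) * (-(b * L) + 5 * R)) = al2 ν β ε R * (ε / ν) * (b * L - 5 * R) by ring]
  linear_combination Real.exp (al2 ν β ε R * (ε / ν) * (b * L - 5 * R)) * key2 hν hβ hε

lemma gg2_eq_gg3 : gg2 ν β ε R (L - 5 * R) = gg3 ν β ε R L (L - 5 * R) := by
  unfold gg2 gg3
  rw [show 4 * ν * β * ((L - 5 * R) - (L - 5 * R)) = 0 by ring, Real.exp_zero]
  linear_combination -Real.exp (-(al2 ν β ε R * (ε / ν) * (L - 5 * R))) * key3 (ν := ν) (β := β) (R := R)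

lemma profileU_eq_gg1 {r : ℝ} (hr : r ≤ -(b * L) + 5 * R) :
    profileU ν β ε R b L r = gg1 ν β ε R b L r := by
  rw [profileU_def, if_pos hr]

lemma profileU_eq_gg2 (hν : 1 ≤ ν) (hβ : 0 < β) (hε : 0 < ε)
    (hmM : -(b * L) + 5 * R < L - 5 * R) {r : ℝ}
    (h1 : -(b * L) + 5 * R ≤ r) (h2 : r ≤ L - 5 * R) :
    profileU ν β ε R b L r = gg2 ν β ε R r := by
  rw [profileU_def]
  rcases eq_or_lt_of_le h1 with h | h
  · rw [if_pos h.symm.le, ← h, gg1_eq_gg2 hν hβ hε]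
  · rw [if_neg (not_le.mpr h)]
    rcases eq_or_lt_of_le h2 with h' | h'
    · rw [if_neg (by simp [h']), h', gg2_eq_gg3]
    · rw [if_pos h']

lemma profileU_eq_gg3 (hm : -(b * L) + 5 * R < 0) (hM : 0 < L - 5 * R) {r : ℝ}
    (hr : L - 5 * R ≤ r) :
    profileU ν β ε R b L r = gg3 ν β ε R L r := by
  rw [profileU_def, if_neg (by linarith), if_neg (not_lt.mpr hr)]

lemma exp_lt_al5 : Real.exp (20 * ν * β * R) < al5 ν β R := by
  unfold al5; linarith

lemma gg1_cont : Continuous (gg1 ν β ε R b L) := by unfold gg1; fun_prop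
lemma gg2_cont : Continuous (gg2 ν β ε R) := by unfold gg2; fun_prop
lemma gg3_cont : Continuous (gg3 ν β ε R L) := by unfold gg3; fun_prop

lemma profileU_pos (hν : 1 ≤ ν) (hβ : 0 < β) (hε : 0 < ε)
    {r : ℝ} (h1 : r ≤ -(b * L) + 5 * R ∨ r ≤ L) :
    0 < profileU ν β ε R b L r := by
  have hν0 : 0 < ν := lt_of_lt_of_le one_pos hν
  rw [profileU_def]
  unfold gg1 gg2 gg3
  split_ifs with h h'
  · have hA1 : 0 < al1 ν β ε R * Real.exp (al2 ν β ε R * (ε / ν) * (b * L - 5 * R)) := by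
      have := al1_pos (ν := ν) (β := β) (ε := ε) (R := R) hν hβ hε; positivity
    have hE : Real.exp (4 * ν * β * (r - (-(b * L) + 5 * R))) ≤ 1 := by
      rw [Real.exp_le_one_iff]
      have h0 : r - (-(b * L) + 5 * R) ≤ 0 := by linarith
      nlinarith [mul_nonneg (show (0:ℝ) ≤ 4 * ν * β by positivity) (neg_nonneg.mpr h0)]
    have := al3_gt_one (ν := ν) (β := β) (ε := ε) (R := R) hν hβ hε
    apply mul_pos hA1; linarith
  · positivity
  · have hrL : r ≤ L := h1.resolve_left h
    have hA3 : 0 < al4 ν β R * Real.exp (-(al2 ν β ε R * (ε / ν) * (L - 5 * R))) := by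
      unfold al4; positivity
    have hE : Real.exp (4 * ν * β * (r - (L - 5 * R))) ≤ Real.exp (20 * ν * β * R) := by
      apply Real.exp_le_exp.mpr
      nlinarith [mul_le_mul_of_nonneg_left (show r - (L - 5 * R) ≤ 5 * R by linarith)
        (show (0:ℝ) ≤ 4 * ν * β by positivity)]
    have := exp_lt_al5 (ν := ν) (β := β) (R := R)
    apply mul_pos hA3; linarith

lemma profileU_cont (hν : 1 ≤ ν) (hβ : 0 < β) (hε : 0 < ε)
    (hmM : -(b * L) + 5 * R < L - 5 * R) :
    Continuous (profileU ν β ε R b L) := by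
  have hinner : Continuous (fun r : ℝ =>
      if r < L - 5 * R then gg2 ν β ε R r else gg3 ν β ε R L r) := by
    apply Continuous.if ?_ gg2_cont gg3_cont
    intro a ha
    rw [show {x : ℝ | x < L - 5 * R} = Iio (L - 5 * R) from rfl, frontier_Iio] at ha
    rw [mem_singleton_iff.mp ha]
    exact gg2_eq_gg3
  have heq : profileU ν β ε R b L = fun r : ℝ =>
      if r ≤ -(b * L) + 5 * R then gg1 ν β ε R b L r
      else if r < L - 5 * R then gg2 ν β ε R r else gg3 ν β ε R L r := by
    funext r; exact profileU_def ν β ε R b L r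
  rw [heq]
  apply Continuous.if ?_ gg1_cont hinner
  intro a ha
  rw [show {x : ℝ | x ≤ -(b * L) + 5 * R} = Iic (-(b * L) + 5 * R) from rfl, frontier_Iic] at ha
  rw [mem_singleton_iff.mp ha, if_pos hmM]
  exact gg1_eq_gg2 hν hβ hε

lemma gg1_anti (hν : 1 ≤ ν) (hβ : 0 < β) (hε : 0 < ε) : Antitone (gg1 ν β ε R b L) := by
  have hν0 : 0 < ν := lt_of_lt_of_le one_pos hν
  have := al1_pos (ν := ν) (β := β) (ε := ε) (R := R) hν hβ hε
  intro x y hxy; unfold gg1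
  gcongr

lemma gg2_anti (hν : 1 ≤ ν) (hβ : 0 < β) (hε : 0 < ε) : Antitone (gg2 ν β ε R) := by
  have hν0 : 0 < ν := lt_of_lt_of_le one_pos hν
  have := al2_pos (ν := ν) (β := β) (ε := ε) (R := R) hν hβ hε
  intro x y hxy; unfold gg2
  apply Real.exp_le_exp.mpr
  have : 0 ≤ al2 ν β ε R * (ε / ν) := by positivity
  nlinarith
lemma gg3_anti (hν : 1 ≤ ν) (hβ : 0 < β) : Antitone (gg3 ν β ε R L) := by
  have hν0 : 0 < ν := lt_of_lt_of_le one_pos hν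
  intro x y hxy; unfold gg3
  gcongr
  unfold al4; positivity

lemma profileU_anti (hν : 1 ≤ ν) (hβ : 0 < β) (hε : 0 < ε)
    (hm : -(b * L) + 5 * R < 0) (hM : 0 < L - 5 * R) :
    AntitoneOn (profileU ν β ε R b L) (Icc (-(b * L)) L) := by
  have hmM : -(b * L) + 5 * R < L - 5 * R := by linarith
  set m := -(b * L) + 5 * R with hmdef
  set M := L - 5 * R with hMdef
  intro x hx y hy hxy
  have e1 := @profileU_eq_gg1 ν β ε R b L
  have e2 := @profileU_eq_gg2 ν β ε R b L hν hβ hε hmM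
  have e3 := @profileU_eq_gg3 ν β ε R b L hm hM
  have a1 := @gg1_anti ν β ε R b L hν hβ hε
  have a2 := @gg2_anti ν β ε R hν hβ hε
  have a3 := @gg3_anti ν β ε R L hν hβ
  have bd1 : gg1 ν β ε R b L m = gg2 ν β ε R m := gg1_eq_gg2 hν hβ hε
  have bd2 : gg2 ν β ε R M = gg3 ν β ε R L M := gg2_eq_gg3
  by_cases h1 : y ≤ m
  · rw [e1 h1, e1 (le_trans hxy h1)]; exact a1 hxy
  push_neg at h1
  by_cases h4 : M ≤ x
  · rw [e3 h4, e3 (le_trans h4 hxy)]; exact a3 hxy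
  push_neg at h4
  by_cases h2 : x ≤ m
  · -- x ≤ m < y
    have hux : gg1 ν β ε R b L m ≤ profileU ν β ε R b L x := by rw [e1 h2]; exact a1 h2
    by_cases h3 : y ≤ M
    · rw [e2 h1.le h3]
      calc gg2 ν β ε R y ≤ gg2 ν β ε R m := a2 (le_of_lt h1)
        _ = gg1 ν β ε R b L m := bd1.symm
        _ ≤ _ := hux
    · push_neg at h3
      rw [e3 h3.le]
      calc gg3 ν β ε R L y ≤ gg3 ν β ε R L M := a3 h3.le
        _ = gg2 ν β ε R M := bd2.symm
        _ ≤ gg2 ν β ε R m := a2 (le_of_lt hmM)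
        _ = gg1 ν β ε R b L m := bd1.symm
        _ ≤ _ := hux
  · push_neg at h2
    by_cases h3 : y ≤ M
    · rw [e2 h2.le (le_trans hxy h3), e2 h1.le h3]; exact a2 hxy
    · push_neg at h3
      rw [e2 h2.le h4.le, e3 h3.le]
      calc gg3 ν β ε R L y ≤ gg3 ν β ε R L M := a3 h3.le
        _ = gg2 ν β ε R M := bd2.symm
        _ ≤ gg2 ν β ε R x := a2 h4.le

lemma gg1_hasDerivAt (r : ℝ) : HasDerivAt (gg1 ν β ε R b L)
    (-(al1 ν β ε R * Real.exp (al2 ν β ε R * (ε / ν) * (b * L - 5 * R)) * (4 * ν * β) *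
      Real.exp (4 * ν * β * (r - (-(b * L) + 5 * R))))) r :=
  hasDerivAt_affExp _ _ _ _ r

lemma gg2_hasDerivAt (r : ℝ) : HasDerivAt (gg2 ν β ε R)
    (-(al2 ν β ε R * (ε / ν) * Real.exp (-(al2 ν β ε R * (ε / ν) * r)))) r :=
  hasDerivAt_expNeg _ r

lemma gg3_hasDerivAt (r : ℝ) : HasDerivAt (gg3 ν β ε R L)
    (-(al4 ν β R * Real.exp (-(al2 ν β ε R * (ε / ν) * (L - 5 * R))) * (4 * ν * β) *
      Real.exp (4 * ν * β * (r - (L - 5 * R))))) r :=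
  hasDerivAt_affExp _ _ _ _ r

/-- the matching of one-sided derivatives at the left junction -/
lemma deriv_match (hν : 1 ≤ ν) (hβ : 0 < β) (hε : 0 < ε) :
    -(al1 ν β ε R * Real.exp (al2 ν β ε R * (ε / ν) * (b * L - 5 * R)) * (4 * ν * β) *
        Real.exp (4 * ν * β * ((-(b * L) + 5 * R) - (-(b * L) + 5 * R))))
      = -(al2 ν β ε R * (ε / ν) * Real.exp (-(al2 ν β ε R * (ε / ν) * (-(b * L) + 5 * R)))) := by
  rw [show 4 * ν * β * ((-(b * L) + 5 * R) - (-(b * L) + 5 * R)) = 0 by ring, Real.exp_zero,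
    show -(al2 ν β ε R * (ε / ν) * (-(b * L) + 5 * R)) = al2 ν β ε R * (ε / ν) * (b * L - 5 * R) by ring]
  linear_combination -Real.exp (al2 ν β ε R * (ε / ν) * (b * L - 5 * R)) * key1 (ε := ε) (R := R) hν hβ

lemma profileU_diffAt (hν : 1 ≤ ν) (hβ : 0 < β) (hε : 0 < ε)
    (hmM : -(b * L) + 5 * R < L - 5 * R) :
    HasDerivAt (profileU ν β ε R b L)
      (-(al2 ν β ε R * (ε / ν) * Real.exp (-(al2 ν β ε R * (ε / ν) * (-(b * L) + 5 * R)))))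
      (-(b * L) + 5 * R) := by
  set m := -(b * L) + 5 * R with hm
  have h1 : HasDerivWithinAt (profileU ν β ε R b L)
      (-(al2 ν β ε R * (ε / ν) * Real.exp (-(al2 ν β ε R * (ε / ν) * m)))) (Iic m) m := by
    have := ((gg1_hasDerivAt (ν := ν) (β := β) (ε := ε) (R := R) (b := b) (L := L) m).hasDerivWithinAt
      (s := Iic m)).congr (fun y hy => profileU_eq_gg1 hy) (profileU_eq_gg1 le_rfl)
    rwa [deriv_match hν hβ hε] at this
  have h2 : HasDerivWithinAt (profileU ν β ε R b L)
      (-(al2 ν β ε R * (ε / ν) * Real.exp (-(al2 ν β ε R * (ε / ν) * m)))) (Ici m) m := by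
    apply ((gg2_hasDerivAt (ν := ν) (β := β) (ε := ε) (R := R) m).hasDerivWithinAt
      (s := Ici m)).congr_of_eventuallyEq ?_ (profileU_eq_gg2 hν hβ hε hmM le_rfl hmM.le)
    have hlt : ∀ᶠ y in nhdsWithin m (Ici m), y < L - 5 * R :=
      nhdsWithin_le_nhds (eventually_lt_nhds hmM)
    filter_upwards [hlt, self_mem_nhdsWithin] with y hy hy'
    exact profileU_eq_gg2 hν hβ hε hmM hy' hy.le
  have := h1.union h2
  rw [Iic_union_Ici] at this
  exact hasDerivWithinAt_univ.mp this

lemma profileU_jump (hν : 1 ≤ ν) (hβ : 0 < β) (hε : 0 < ε) (hεβ : ε ≤ β)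
    (hm : -(b * L) + 5 * R < 0) (hM : 0 < L - 5 * R) :
    derivWithin (profileU ν β ε R b L) (Ioi (L - 5 * R)) (L - 5 * R) -
      derivWithin (profileU ν β ε R b L) (Iio (L - 5 * R)) (L - 5 * R) ≤ 0 := by
  have hν0 : 0 < ν := lt_of_lt_of_le one_pos hν
  have hmM : -(b * L) + 5 * R < L - 5 * R := by linarith
  set M := L - 5 * R with hMdef
  have hIoi : derivWithin (profileU ν β ε R b L) (Ioi M) M
      = -(al4 ν β R * Real.exp (-(al2 ν β ε R * (ε / ν) * (L - 5 * R))) * (4 * ν * β) *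
        Real.exp (4 * ν * β * (M - (L - 5 * R)))) := by
    apply HasDerivWithinAt.derivWithin ?_ (uniqueDiffWithinAt_Ioi M)
    exact ((gg3_hasDerivAt (ν := ν) (β := β) (ε := ε) (R := R) (L := L) M).hasDerivWithinAt
      (s := Ioi M)).congr (fun y hy => profileU_eq_gg3 hm hM (le_of_lt hy))
      (profileU_eq_gg3 hm hM le_rfl)
  have hIio : derivWithin (profileU ν β ε R b L) (Iio M) M
      = -(al2 ν β ε R * (ε / ν) * Real.exp (-(al2 ν β ε R * (ε / ν) * M))) := by
    apply HasDerivWithinAt.derivWithin ?_ (uniqueDiffWithinAt_Iio M)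
    apply ((gg2_hasDerivAt (ν := ν) (β := β) (ε := ε) (R := R) M).hasDerivWithinAt
      (s := Iio M)).congr_of_eventuallyEq ?_ (profileU_eq_gg2 hν hβ hε hmM hmM.le le_rfl)
    have hgt : ∀ᶠ y in nhdsWithin M (Iio M), -(b * L) + 5 * R < y :=
      nhdsWithin_le_nhds (eventually_gt_nhds hmM)
    filter_upwards [hgt, self_mem_nhdsWithin] with y hy hy'
    exact profileU_eq_gg2 hν hβ hε hmM hy.le (le_of_lt hy')
  rw [hIoi, hIio, show 4 * ν * β * (M - (L - 5 * R)) = 0 by ring, Real.exp_zero]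
  have hE : (0:ℝ) < Real.exp (-(al2 ν β ε R * (ε / ν) * (L - 5 * R))) := Real.exp_pos _
  have hc : al2 ν β ε R * (ε / ν) ≤ 4 * ν * β * al4 ν β R := by
    have h := al2_le (ν := ν) (β := β) (ε := ε) (R := R)
    have h2 := mul_le_mul_of_nonneg_right h (le_of_lt (div_pos hε hν0))
    calc al2 ν β ε R * (ε / ν) ≤ 4 * ν ^ 2 * β * Real.exp (-(20 * ν * β * R)) / ε * (ε / ν) := h2
      _ = 4 * ν * β * al4 ν β R := by unfold al4; field_simp
  rw [hMdef]
  nlinarith [mul_le_mul_of_nonneg_right hc hE.le]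
lemma core1 (lam A E X al α ν β q : ℝ)
    (hA : 0 ≤ A) (hE0 : 0 < E) (hβ : 0 < β) (hν0 : 0 < ν)
    (hlam : 0 < lam) (hlamal : lam * al ≤ 4 * ν * β * β * X) (hXE : X ≤ E)
    (hαν : 1 ≤ α * ν) (hq : -β ≤ q) :
    lam * (A * (al - E)) + α / 2 * (-(A * (4 * ν * β) * (4 * ν * β) * E)) +
      q * (-(A * (4 * ν * β) * E)) ≤ 0 := by
  have h3 : β ≤ α * (4 * ν * β) / 2 + q := by
    nlinarith [mul_nonneg (sub_nonneg.mpr hαν) hβ.le]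
  have h1 : lam * (al - E) ≤ lam * al := by nlinarith [mul_nonneg hlam.le hE0.le]
  have h2 : 4 * ν * β * β * X ≤ 4 * ν * β * β * E :=
    mul_le_mul_of_nonneg_left hXE (by positivity)
  have h4 : 4 * ν * β * β * E ≤ 4 * ν * β * E * (α * (4 * ν * β) / 2 + q) := by
    nlinarith [mul_le_mul_of_nonneg_left h3 (show (0:ℝ) ≤ 4 * ν * β * E by positivity)]
  have hsum : lam * (al - E) ≤ 4 * ν * β * E * (α * (4 * ν * β) / 2 + q) := by linarith
  nlinarith [mul_le_mul_of_nonneg_left hsum hA]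

lemma core2 (lam c F ε α q : ℝ) (hF : 0 < F) (hc : 0 < c) (hε : 0 < ε)
    (hlam : lam ≤ c * ε / 2) (hαc : α * c ≤ ε) (hq : ε ≤ q) :
    lam * F + α / 2 * (c * c * F) + q * (-(c * F)) ≤ 0 := by
  have h8 : α * c * c ≤ ε * c := mul_le_mul_of_nonneg_right hαc hc.le
  have h9 : ε * c ≤ q * c := mul_le_mul_of_nonneg_right hq hc.le
  have hS : lam + α / 2 * (c * c) + q * (-c) ≤ 0 := by linarith
  nlinarith [mul_le_mul_of_nonneg_left hS hF.le]


lemma core3 (α ν a ε : ℝ) (hα2 : α ≤ ν) (hν0 : 0 < ν) (ha : 0 < a)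
    (hle1 : a ≤ 1) (hε : 0 < ε) (hα0 : 0 < α) : α * (a * (ε / ν)) ≤ ε := by
  have h := mul_le_mul hα2 (mul_le_mul_of_nonneg_right hle1 (by positivity : (0:ℝ) ≤ ε / ν))
    (by positivity) hν0.le
  have h2 : ν * (1 * (ε / ν)) = ε := by field_simp
  linarith

def lam0v (ν β ε R : ℝ) : ℝ :=
  min (4 * ν * β * β * Real.exp (-(20 * ν * β * R)) / al3 ν β ε R)
    (min (al2 ν β ε R * ε ^ 2 / (2 * ν)) (4 * ν * β * β / al5 ν β R))

lemma al3_pos (hν : 1 ≤ ν) (hβ : 0 < β) (hε : 0 < ε) : 0 < al3 ν β ε R :=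
  lt_trans one_pos (al3_gt_one hν hβ hε)

lemma al5_pos : 0 < al5 ν β R := lt_trans one_pos al5_gt_one

lemma lam0v_pos (hν : 1 ≤ ν) (hβ : 0 < β) (hε : 0 < ε) : 0 < lam0v ν β ε R := by
  have hν0 : 0 < ν := lt_of_lt_of_le one_pos hν
  have h3 := al3_pos (ν := ν) (β := β) (ε := ε) (R := R) hν hβ hε
  have h5 := al5_pos (ν := ν) (β := β) (R := R)
  have h2 := al2_pos (ν := ν) (β := β) (ε := ε) (R := R) hν hβ hε
  unfold lam0v
  exact lt_min (by positivity) (lt_min (by positivity) (by positivity))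

lemma gg1_deriv2 (r : ℝ) : deriv (deriv (gg1 ν β ε R b L)) r =
    -(al1 ν β ε R * Real.exp (al2 ν β ε R * (ε / ν) * (b * L - 5 * R)) * (4 * ν * β) * (4 * ν * β) *
      Real.exp (4 * ν * β * (r - (-(b * L) + 5 * R)))) := deriv2_affExp _ _ _ _ r

lemma gg2_deriv2 (r : ℝ) : deriv (deriv (gg2 ν β ε R)) r =
    al2 ν β ε R * (ε / ν) * (al2 ν β ε R * (ε / ν)) * Real.exp (-(al2 ν β ε R * (ε / ν) * r)) :=
  deriv2_expNeg _ r

lemma gg3_deriv2 (r : ℝ) : deriv (deriv (gg3 ν β ε R L)) r =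
    -(al4 ν β R * Real.exp (-(al2 ν β ε R * (ε / ν) * (L - 5 * R))) * (4 * ν * β) * (4 * ν * β) *
      Real.exp (4 * ν * β * (r - (L - 5 * R)))) := deriv2_affExp _ _ _ _ r

lemma profileU_supersol (hν : 1 ≤ ν) (hβ : 0 < β) (hε : 0 < ε) (hεβ : ε ≤ β) (hR : 0 < R)
    (hm : -(b * L) + 5 * R < 0) (hM : 0 < L - 5 * R) {r α q : ℝ}
    (hr1 : -(b * L) < r) (hr2 : r < L)
    (hne1 : r ≠ -(b * L) + 5 * R) (hne2 : r ≠ L - 5 * R)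
    (hα1 : 1 / ν ≤ α) (hα2 : α ≤ ν) (hq : |q| ≤ β)
    (hq2 : (-(b * L) + 5 * R < r ∧ r < L - 5 * R) → ε ≤ q) :
    lam0v ν β ε R * profileU ν β ε R b L r +
      α / 2 * deriv (deriv (profileU ν β ε R b L)) r +
      q * deriv (profileU ν β ε R b L) r ≤ 0 := by
  have hν0 : 0 < ν := lt_of_lt_of_le one_pos hν
  have hmM : -(b * L) + 5 * R < L - 5 * R := by linarith
  obtain ⟨hqlo, hqhi⟩ := abs_le.mp hq
  have hαν : 1 ≤ α * ν := by
    rw [div_le_iff₀ hν0] at hα1; linarith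
  have hα0 : 0 < α := lt_of_lt_of_le (by positivity) hα1
  have hlam0 := lam0v_pos (ν := ν) (β := β) (ε := ε) (R := R) hν hβ hε
  have hal1 := al1_pos (ν := ν) (β := β) (ε := ε) (R := R) hν hβ hε
  have hal2 := al2_pos (ν := ν) (β := β) (ε := ε) (R := R) hν hβ hε
  rcases lt_trichotomy r (-(b * L) + 5 * R) with hlt | heq | hgt
  · -- region 1
    have hev : profileU ν β ε R b L =ᶠ[nhds r] gg1 ν β ε R b L :=
      eventually_of_mem (Iio_mem_nhds hlt) fun y hy => profileU_eq_gg1 (le_of_lt hy)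
    set A := al1 ν β ε R * Real.exp (al2 ν β ε R * (ε / ν) * (b * L - 5 * R)) with hA
    set E := Real.exp (4 * ν * β * (r - (-(b * L) + 5 * R))) with hEd
    have hu : profileU ν β ε R b L r = A * (al3 ν β ε R - E) := profileU_eq_gg1 hlt.le
    have hd : deriv (profileU ν β ε R b L) r = -(A * (4 * ν * β) * E) :=
      hev.deriv_eq.trans (gg1_hasDerivAt r).deriv
    have hdd : deriv (deriv (profileU ν β ε R b L)) r = -(A * (4 * ν * β) * (4 * ν * β) * E) :=
      hev.deriv.deriv_eq.trans (gg1_deriv2 r)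
    rw [hu, hd, hdd]
    have hApos : 0 < A := by rw [hA]; positivity
    have hE0 : 0 < E := Real.exp_pos _
    have hE : Real.exp (-(20 * ν * β * R)) ≤ E := by
      rw [hEd]; apply Real.exp_le_exp.mpr
      nlinarith [mul_le_mul_of_nonneg_left (show -(5 * R) ≤ r - (-(b * L) + 5 * R) by linarith)
        (show (0:ℝ) ≤ 4 * ν * β by positivity)]
    have hal3 := al3_pos (ν := ν) (β := β) (ε := ε) (R := R) hν hβ hε
    have hlam : lam0v ν β ε R * al3 ν β ε R ≤ 4 * ν * β * β * Real.exp (-(20 * ν * β * R)) :=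
      (le_div_iff₀ hal3).mp (min_le_left _ _)
    exact core1 _ A E (Real.exp (-(20 * ν * β * R))) (al3 ν β ε R) α ν β q
      hApos.le hE0 hβ hν0 hlam0 hlam hE hαν hqlo
  · exact absurd heq hne1
  rcases lt_trichotomy r (L - 5 * R) with hlt | heq | hgt'
  · -- region 2
    have hqε : ε ≤ q := hq2 ⟨hgt, hlt⟩
    have hev : profileU ν β ε R b L =ᶠ[nhds r] gg2 ν β ε R := by
      apply eventually_of_mem (IsOpen.mem_nhds isOpen_Ioo ⟨hgt, hlt⟩
        (s := Ioo (-(b * L) + 5 * R) (L - 5 * R)))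
      exact fun y hy => profileU_eq_gg2 hν hβ hε hmM hy.1.le hy.2.le
    set c := al2 ν β ε R * (ε / ν) with hcd
    set F := Real.exp (-(al2 ν β ε R * (ε / ν) * r)) with hFd
    have hu : profileU ν β ε R b L r = F := profileU_eq_gg2 hν hβ hε hmM hgt.le hlt.le
    have hd : deriv (profileU ν β ε R b L) r = -(c * F) :=
      hev.deriv_eq.trans (gg2_hasDerivAt r).deriv
    have hdd : deriv (deriv (profileU ν β ε R b L)) r = c * c * F :=
      hev.deriv.deriv_eq.trans (gg2_deriv2 r)
    rw [hu, hd, hdd]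
    have hc : 0 < c := by rw [hcd]; positivity
    have hF : 0 < F := Real.exp_pos _
    have hlam : lam0v ν β ε R ≤ al2 ν β ε R * ε ^ 2 / (2 * ν) :=
      le_trans (min_le_right _ _) (min_le_left _ _)
    have hlam' : lam0v ν β ε R ≤ c * ε / 2 := by
      have heq : al2 ν β ε R * ε ^ 2 / (2 * ν) = al2 ν β ε R * (ε / ν) * ε / 2 := by
        field_simp
      rw [hcd]; linarith [hlam.trans_eq heq]
    have h7 : α * c ≤ ε := by
      rw [hcd]; exact core3 α ν _ ε hα2 hν0 hal2 (al2_le_one (ν := ν) (β := β) (ε := ε) (R := R)) hε hα0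
    exact core2 _ c F ε α q hF hc hε hlam' h7 hqε
  · exact absurd heq hne2
  · -- region 3
    have hev : profileU ν β ε R b L =ᶠ[nhds r] gg3 ν β ε R L :=
      eventually_of_mem (Ioi_mem_nhds hgt') fun y hy => profileU_eq_gg3 hm hM (le_of_lt hy)
    set A := al4 ν β R * Real.exp (-(al2 ν β ε R * (ε / ν) * (L - 5 * R))) with hA
    set E := Real.exp (4 * ν * β * (r - (L - 5 * R))) with hEd
    have hu : profileU ν β ε R b L r = A * (al5 ν β R - E) := profileU_eq_gg3 hm hM hgt'.le
    have hd : deriv (profileU ν β ε R b L) r = -(A * (4 * ν * β) * E) :=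
      hev.deriv_eq.trans (gg3_hasDerivAt r).deriv
    have hdd : deriv (deriv (profileU ν β ε R b L)) r = -(A * (4 * ν * β) * (4 * ν * β) * E) :=
      hev.deriv.deriv_eq.trans (gg3_deriv2 r)
    rw [hu, hd, hdd]
    have hApos : 0 < A := by rw [hA]; unfold al4; positivity
    have hE0 : 0 < E := Real.exp_pos _
    have hE : (1:ℝ) ≤ E := by
      rw [hEd]; exact Real.one_le_exp (mul_nonneg (by positivity) (by linarith))
    have hal5 := al5_pos (ν := ν) (β := β) (R := R)
    have hlam : lam0v ν β ε R * al5 ν β R ≤ 4 * ν * β * β * 1 := by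
      rw [mul_one]
      exact (le_div_iff₀ hal5).mp (le_trans (min_le_right _ _) (min_le_right _ _))
    exact core1 _ A E 1 (al5 ν β R) α ν β q hApos.le hE0 hβ hν0 hlam0 hlam hE hαν hqlo

end SupAux

theorem supersolution_profile (ν β ε R : ℝ)
    (hν : 1 ≤ ν) (hβ : 0 < β) (hε : 0 < ε) (hεβ : ε ≤ β) (hR : 0 < R) :
    -- (i) and (ii)
    (∀ b > (0:ℝ), ∀ L : ℝ, -(b * L) + 5 * R < 0 → 0 < L - 5 * R →
      (∀ r ∈ Icc (-(b * L)) L, 0 < profileU ν β ε R b L r) ∧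
      ContinuousOn (profileU ν β ε R b L) (Icc (-(b * L)) L) ∧
      AntitoneOn (profileU ν β ε R b L) (Icc (-(b * L)) L) ∧
      DifferentiableAt ℝ (profileU ν β ε R b L) (-(b * L) + 5 * R) ∧
      derivWithin (profileU ν β ε R b L) (Ioi (L - 5 * R)) (L - 5 * R) -
          derivWithin (profileU ν β ε R b L) (Iio (L - 5 * R)) (L - 5 * R) ≤ 0) ∧
    -- (iii)
    (∃ lam0 > (0:ℝ), ∀ b > (0:ℝ), ∀ L : ℝ, -(b * L) + 5 * R < 0 → 0 < L - 5 * R →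
      ∀ r : ℝ, -(b * L) < r → r < L → r ≠ -(b * L) + 5 * R → r ≠ L - 5 * R →
      ∀ α : ℝ, 1 / ν ≤ α → α ≤ ν →
      ∀ q : ℝ, |q| ≤ β → ((-(b * L) + 5 * R < r ∧ r < L - 5 * R) → ε ≤ q) →
        lam0 * profileU ν β ε R b L r +
            α / 2 * deriv (deriv (profileU ν β ε R b L)) r +
            q * deriv (profileU ν β ε R b L) r ≤ 0) := by
  constructor
  · intro b hb L hm hM
    have hmM : -(b * L) + 5 * R < L - 5 * R := by linarith
    exact ⟨fun r hr => SupAux.profileU_pos hν hβ hε (Or.inr hr.2),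
      (SupAux.profileU_cont hν hβ hε hmM).continuousOn,
      SupAux.profileU_anti hν hβ hε hm hM,
      (SupAux.profileU_diffAt hν hβ hε hmM).differentiableAt,
      SupAux.profileU_jump hν hβ hε hεβ hm hM⟩
  · exact ⟨SupAux.lam0v ν β ε R, SupAux.lam0v_pos hν hβ hε,
      fun b hb L hm hM r hr1 hr2 hne1 hne2 α hα1 hα2 q hq hq2 =>
        SupAux.profileU_supersol hν hβ hε hεβ hR hm hM hr1 hr2 hne1 hne2 hα1 hα2 hq hq2⟩

end
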